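/- Lupu–Lupu mean value theorem for the integral operators T and S: Let f, g : ℝ → ℝ be continuous on [0, 1], and define (Tφ)(t) = φ(t) - ∫_0^t φ(x) dx and (Sψ)(t) = t·ψ(t) - ∫_0^t x·ψ(x) dx for continuous φ, ψ. Then: (i) there exists ξ₁ ∈ (0, 1) such that (∫_0^1 f(x) dx) * (Tg)(ξ₁) = (∫_0^1 g(x) dx) * (Tf)(ξ₁); (ii) there exists ξ₂ ∈ (0, 1) such that (Tf)(ξ₂) = (Sf)(ξ₂); (iii) there exists ξ₃ ∈ (0, 1) such that (∫_0^1 f(x) dx) * (Sg)(ξ₃) = (∫_0^1 g(x) dx) * (Sf)(ξ₃). -/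

import Mathlib

open intervalIntegral

/-- The operator `T`: `(Tφ)(t) = φ(t) - ∫_0^t φ(x) dx`. -/
noncomputable def Toper (φ : ℝ → ℝ) (t : ℝ) : ℝ := φ t - ∫ x in (0 : ℝ)..t, φ x

/-- The operator `S`: `(Sφ)(t) = t·φ(t) - ∫_0^t x·φ(x) dx`. -/
noncomputable def Soper (φ : ℝ → ℝ) (t : ℝ) : ℝ := t * φ t - ∫ x in (0 : ℝ)..t, x * φ x

open Set Filter Topology

lemma soper_eq_toper (φ : ℝ → ℝ) (t : ℝ) : Soper φ t = Toper (fun x => x * φ x) t := rfl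

lemma hasDerivAt_prim {h : ℝ → ℝ} (hc : Continuous h) (t : ℝ) :
    HasDerivAt (fun u => ∫ x in (0:ℝ)..u, h x) (h t) t :=
  intervalIntegral.integral_hasDerivAt_right (hc.intervalIntegrable 0 t)
    (hc.stronglyMeasurableAtFilter _ _) hc.continuousAt

lemma toper_continuous {h : ℝ → ℝ} (hc : Continuous h) : Continuous (Toper h) := by
  have hd : Differentiable ℝ (fun u => ∫ x in (0:ℝ)..u, h x) :=
    fun t => (hasDerivAt_prim hc t).differentiableAt
  exact hc.sub hd.continuous

lemma toper_neg (h : ℝ → ℝ) (t : ℝ) :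
    Toper (fun x => -h x) t = -Toper h t := by
  unfold Toper
  rw [intervalIntegral.integral_neg]
  ring

lemma toper_lin (a b : ℝ) {u v : ℝ → ℝ} (hu : Continuous u) (hv : Continuous v) (t : ℝ) :
    Toper (fun x => a * u x - b * v x) t = a * Toper u t - b * Toper v t := by
  unfold Toper
  rw [intervalIntegral.integral_sub (f := fun x => a * u x) (g := fun x => b * v x) ((continuous_const.mul hu).intervalIntegrable 0 t)
      ((continuous_const.mul hv).intervalIntegrable 0 t),
    intervalIntegral.integral_const_mul, intervalIntegral.integral_const_mul]
  ring

lemma primitive_pos {h : ℝ → ℝ} (hc : Continuous h)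
    (hpos : ∀ t ∈ Set.Ioo (0:ℝ) 1, 0 < Toper h t) :
    ∀ t ∈ Set.Ioc (0:ℝ) 1, 0 < ∫ x in (0:ℝ)..t, h x := by
  have hF : ∀ t : ℝ, HasDerivAt (fun u => Real.exp (-u) * ∫ x in (0:ℝ)..u, h x)
      (Real.exp (-t) * Toper h t) t := by
    intro t
    have h1 : HasDerivAt (fun u : ℝ => Real.exp (-u)) (Real.exp (-t) * (-1)) t :=
      (hasDerivAt_neg t).exp
    have h2 := h1.mul (hasDerivAt_prim hc t)
    exact h2.congr_deriv (by unfold Toper; ring)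
  have hmono : StrictMonoOn (fun u => Real.exp (-u) * ∫ x in (0:ℝ)..u, h x)
      (Set.Icc (0:ℝ) 1) := by
    apply strictMonoOn_of_deriv_pos (convex_Icc 0 1)
    · exact fun t _ => ((hF t).differentiableAt).continuousAt.continuousWithinAt
    · intro t ht
      rw [interior_Icc] at ht
      rw [(hF t).deriv]
      exact mul_pos (Real.exp_pos _) (hpos t ht)
  intro t ht
  have h0 : (fun u => Real.exp (-u) * ∫ x in (0:ℝ)..u, h x) 0 = 0 := by
    simp
  have := hmono (Set.mem_Icc.mpr ⟨le_refl 0, zero_le_one⟩)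
    (Set.mem_Icc.mpr ⟨ht.1.le, ht.2⟩) ht.1
  rw [h0] at this
  rcases mul_pos_iff.mp this with ⟨_, hx⟩ | ⟨hx, _⟩
  · exact hx
  · exact absurd (Real.exp_pos (-t)) (not_lt.mpr hx.le)

lemma sign_const {F : ℝ → ℝ} (hc : Continuous F)
    (hne : ∀ t ∈ Set.Ioo (0:ℝ) 1, F t ≠ 0) :
    (∀ t ∈ Set.Ioo (0:ℝ) 1, 0 < F t) ∨ (∀ t ∈ Set.Ioo (0:ℝ) 1, F t < 0) := by
  have hhalf : (1/2 : ℝ) ∈ Set.Ioo (0:ℝ) 1 := by norm_num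
  have key : ∀ t ∈ Set.Ioo (0:ℝ) 1, ∀ s ∈ Set.Ioo (0:ℝ) 1, F t < 0 → 0 < F s → False := by
    intro t ht s hs htneg hspos
    have hsub : Set.uIcc t s ⊆ Set.Ioo (0:ℝ) 1 :=
      Set.OrdConnected.uIcc_subset Set.ordConnected_Ioo ht hs
    have := intermediate_value_uIcc (hc.continuousOn (s := Set.uIcc t s))
    have h0 : (0:ℝ) ∈ Set.uIcc (F t) (F s) := Set.mem_uIcc.mpr (Or.inl ⟨htneg.le, hspos.le⟩)
    obtain ⟨c, hcmem, hc0⟩ := this h0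
    exact hne c (hsub hcmem) hc0
  rcases (hne _ hhalf).lt_or_gt with hneg | hpos
  · right
    intro t ht
    by_contra hle
    have : 0 < F t := lt_of_le_of_ne (not_lt.mp hle) (Ne.symm (hne t ht))
    exact key _ hhalf t ht hneg this
  · left
    intro t ht
    by_contra hle
    have : F t < 0 := lt_of_le_of_ne (not_lt.mp hle) (hne t ht)
    exact key t ht _ hhalf this hpos

/-- Positive-case engine for part (i). -/
lemma pos_i {h : ℝ → ℝ} (hc : Continuous h)
    (hpos : ∀ t ∈ Set.Ioo (0:ℝ) 1, 0 < Toper h t) : 0 < ∫ x in (0:ℝ)..1, h x :=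
  primitive_pos hc hpos 1 ⟨zero_lt_one, le_refl 1⟩

/-- Positive-case engine for part (ii). -/
lemma pos_ii {h : ℝ → ℝ} (hc : Continuous h)
    (hpos : ∀ t ∈ Set.Ioo (0:ℝ) 1, 0 < Toper h t) : 0 < h 1 := by
  have hint : 0 < ∫ x in (0:ℝ)..1, h x := pos_i hc hpos
  have hne : (𝓝[Set.Ioo (0:ℝ) 1] 1).NeBot := by
    rw [← mem_closure_iff_nhdsWithin_neBot, closure_Ioo (zero_ne_one)]
    exact ⟨zero_le_one, le_refl 1⟩
  have htd : Filter.Tendsto (Toper h) (𝓝[Set.Ioo (0:ℝ) 1] 1) (𝓝 (Toper h 1)) :=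
    ((toper_continuous hc).tendsto 1).mono_left nhdsWithin_le_nhds
  have hge : 0 ≤ Toper h 1 :=
    ge_of_tendsto htd (eventually_nhdsWithin_of_forall (fun t ht => (hpos t ht).le))
  unfold Toper at hge
  linarith

/-- Positive-case engine for part (iii). -/
lemma pos_iii {h : ℝ → ℝ} (hc : Continuous h)
    (hpos : ∀ t ∈ Set.Ioo (0:ℝ) 1, 0 < Toper (fun x => x * h x) t) :
    0 < ∫ x in (0:ℝ)..1, h x := by
  have hw : Continuous (fun x => x * h x) := continuous_id.mul hc
  have hprim := primitive_pos hw hpos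
  have hhpos : ∀ t ∈ Set.Ioo (0:ℝ) 1, 0 < h t := by
    intro t ht
    have h1 := hpos t ht
    have h2 := hprim t ⟨ht.1, ht.2.le⟩
    simp only [Toper] at h1
    have hth : 0 < t * h t := by linarith
    rcases mul_pos_iff.mp hth with ⟨_, hx⟩ | ⟨hx, _⟩
    · exact hx
    · exact absurd ht.1 (not_lt.mpr hx.le)
  exact intervalIntegral.intervalIntegral_pos_of_pos_on (hc.intervalIntegrable 0 1)
    hhpos zero_lt_one

/-- Existence of a zero of `Toper h` in `(0,1)` given the right endpoint data. -/
lemma exists_zero_i {h : ℝ → ℝ} (hc : Continuous h)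
    (hint : ∫ x in (0:ℝ)..1, h x = 0) :
    ∃ ξ ∈ Set.Ioo (0:ℝ) 1, Toper h ξ = 0 := by
  by_contra hcon
  push_neg at hcon
  rcases sign_const (toper_continuous hc) hcon with hp | hn
  · exact absurd hint (ne_of_gt (pos_i hc hp))
  · have hp : ∀ t ∈ Set.Ioo (0:ℝ) 1, 0 < Toper (fun x => -h x) t := by
      intro t ht; rw [toper_neg]; linarith [hn t ht]
    have := pos_i (h := fun x => -h x) hc.neg hp
    rw [intervalIntegral.integral_neg, hint] at this
    simp at this

lemma exists_zero_ii {h : ℝ → ℝ} (hc : Continuous h) (h1 : h 1 = 0) :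
    ∃ ξ ∈ Set.Ioo (0:ℝ) 1, Toper h ξ = 0 := by
  by_contra hcon
  push_neg at hcon
  rcases sign_const (toper_continuous hc) hcon with hp | hn
  · have := pos_ii hc hp
    rw [h1] at this; exact lt_irrefl 0 this
  · have hp : ∀ t ∈ Set.Ioo (0:ℝ) 1, 0 < Toper (fun x => -h x) t := by
      intro t ht; rw [toper_neg]; linarith [hn t ht]
    have := pos_ii hc.neg hp
    simp [h1] at this

lemma exists_zero_iii {h : ℝ → ℝ} (hc : Continuous h)
    (hint : ∫ x in (0:ℝ)..1, h x = 0) :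
    ∃ ξ ∈ Set.Ioo (0:ℝ) 1, Toper (fun x => x * h x) ξ = 0 := by
  by_contra hcon
  push_neg at hcon
  have hw : Continuous (fun x => x * h x) := continuous_id.mul hc
  rcases sign_const (toper_continuous hw) hcon with hp | hn
  · exact absurd hint (ne_of_gt (pos_iii hc hp))
  · have hp : ∀ t ∈ Set.Ioo (0:ℝ) 1, 0 < Toper (fun x => x * (-h x)) t := by
      intro t ht
      have heq : (fun x => x * (-h x)) = (fun x => -(x * h x)) := by funext x; ring
      rw [heq, toper_neg]
      linarith [hn t ht]
    have := pos_iii (h := fun x => -h x) hc.neg hp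
    rw [intervalIntegral.integral_neg, hint] at this
    simp at this

/-- Transfer lemma: `Toper` only depends on values on `[0,1]` for `t ∈ [0,1]`. -/
lemma toper_congr {f g : ℝ → ℝ} (h : Set.EqOn f g (Set.Icc 0 1)) {t : ℝ}
    (ht : t ∈ Set.Icc (0:ℝ) 1) : Toper f t = Toper g t := by
  have hsub : Set.uIcc (0:ℝ) t ⊆ Set.Icc (0:ℝ) 1 := by
    rw [Set.uIcc_of_le ht.1]
    exact Set.Icc_subset_Icc le_rfl ht.2
  unfold Toper
  rw [h ht, intervalIntegral.integral_congr (fun x hx => h (hsub hx))]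

lemma soper_congr {f g : ℝ → ℝ} (h : Set.EqOn f g (Set.Icc 0 1)) {t : ℝ}
    (ht : t ∈ Set.Icc (0:ℝ) 1) : Soper f t = Soper g t := by
  have hsub : Set.uIcc (0:ℝ) t ⊆ Set.Icc (0:ℝ) 1 := by
    rw [Set.uIcc_of_le ht.1]
    exact Set.Icc_subset_Icc le_rfl ht.2
  unfold Soper
  rw [h ht, intervalIntegral.integral_congr (fun x hx => by rw [h (hsub hx)])]

/-- Lupu–Lupu mean value theorem for the integral operators `T` and `S`. -/
theorem lupu_lupu (f g : ℝ → ℝ)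
    (hf : ContinuousOn f (Set.Icc 0 1)) (hg : ContinuousOn g (Set.Icc 0 1)) :
    (∃ ξ₁ ∈ Set.Ioo (0 : ℝ) 1,
        (∫ x in (0 : ℝ)..1, f x) * Toper g ξ₁ = (∫ x in (0 : ℝ)..1, g x) * Toper f ξ₁) ∧
    (∃ ξ₂ ∈ Set.Ioo (0 : ℝ) 1, Toper f ξ₂ = Soper f ξ₂) ∧
    (∃ ξ₃ ∈ Set.Ioo (0 : ℝ) 1,
        (∫ x in (0 : ℝ)..1, f x) * Soper g ξ₃ = (∫ x in (0 : ℝ)..1, g x) * Soper f ξ₃) := by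
  -- Extend f and g continuously to ℝ
  set F : ℝ → ℝ := Set.IccExtend zero_le_one ((Set.Icc (0:ℝ) 1).restrict f) with hFdef
  set G : ℝ → ℝ := Set.IccExtend zero_le_one ((Set.Icc (0:ℝ) 1).restrict g) with hGdef
  have hFc : Continuous F := (ContinuousOn.restrict hf).Icc_extend'
  have hGc : Continuous G := (ContinuousOn.restrict hg).Icc_extend'
  have hFeq : Set.EqOn f F (Set.Icc 0 1) := fun x hx => by
    rw [hFdef, Set.IccExtend_of_mem _ _ hx]; rfl
  have hGeq : Set.EqOn g G (Set.Icc 0 1) := fun x hx => by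
    rw [hGdef, Set.IccExtend_of_mem _ _ hx]; rfl
  have hIf : (∫ x in (0:ℝ)..1, f x) = ∫ x in (0:ℝ)..1, F x :=
    intervalIntegral.integral_congr (fun x hx => hFeq (by rwa [Set.uIcc_of_le zero_le_one] at hx))
  have hIg : (∫ x in (0:ℝ)..1, g x) = ∫ x in (0:ℝ)..1, G x :=
    intervalIntegral.integral_congr (fun x hx => hGeq (by rwa [Set.uIcc_of_le zero_le_one] at hx))
  set A : ℝ := ∫ x in (0:ℝ)..1, f x with hA
  set B : ℝ := ∫ x in (0:ℝ)..1, g x with hB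
  -- the key combined function
  set h : ℝ → ℝ := fun x => A * G x - B * F x with hh
  have hhc : Continuous h := (continuous_const.mul hGc).sub (continuous_const.mul hFc)
  have hhint : ∫ x in (0:ℝ)..1, h x = 0 := by
    rw [hh]
    rw [intervalIntegral.integral_sub (f := fun x => A * G x) (g := fun x => B * F x) ((continuous_const.mul hGc).intervalIntegrable 0 1)
        ((continuous_const.mul hFc).intervalIntegrable 0 1),
      intervalIntegral.integral_const_mul, intervalIntegral.integral_const_mul,
      ← hIf, ← hIg]
    ring
  refine ⟨?_, ?_, ?_⟩
  · -- part (i)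
    obtain ⟨ξ, hξ, hz⟩ := exists_zero_i hhc hhint
    refine ⟨ξ, hξ, ?_⟩
    have hmem : ξ ∈ Set.Icc (0:ℝ) 1 := ⟨hξ.1.le, hξ.2.le⟩
    rw [hh, toper_lin A B hGc hFc] at hz
    rw [toper_congr hFeq hmem, toper_congr hGeq hmem]
    linarith
  · -- part (ii)
    set w : ℝ → ℝ := fun x => (1 - x) * F x with hw
    have hwc : Continuous w := (continuous_const.sub continuous_id).mul hFc
    have hw1 : w 1 = 0 := by rw [hw]; simp
    obtain ⟨ξ, hξ, hz⟩ := exists_zero_ii hwc hw1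
    refine ⟨ξ, hξ, ?_⟩
    have hmem : ξ ∈ Set.Icc (0:ℝ) 1 := ⟨hξ.1.le, hξ.2.le⟩
    have hsplit : Toper w ξ = Toper F ξ - Soper F ξ := by
      unfold Toper Soper
      have heq : ∀ x, w x = F x - x * F x := fun x => by rw [hw]; ring
      have : (∫ x in (0:ℝ)..ξ, w x) = (∫ x in (0:ℝ)..ξ, F x) - ∫ x in (0:ℝ)..ξ, x * F x := by
        rw [intervalIntegral.integral_congr (fun x _ => heq x),
          intervalIntegral.integral_sub (g := fun x => x * F x) (hFc.intervalIntegrable 0 ξ)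
            ((continuous_id'.mul hFc).intervalIntegrable 0 ξ)]
      rw [this, hw]
      ring
    rw [hsplit] at hz
    rw [toper_congr hFeq hmem, soper_congr hFeq hmem]
    linarith
  · -- part (iii)
    obtain ⟨ξ, hξ, hz⟩ := exists_zero_iii hhc hhint
    refine ⟨ξ, hξ, ?_⟩
    have hmem : ξ ∈ Set.Icc (0:ℝ) 1 := ⟨hξ.1.le, hξ.2.le⟩
    have heq : (fun x => x * h x) = (fun x => A * (x * G x) - B * (x * F x)) := by
      funext x; rw [hh]; ring
    rw [heq, toper_lin A B (u := fun x => x * G x) (v := fun x => x * F x) (continuous_id'.mul hGc) (continuous_id'.mul hFc),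
      ← soper_eq_toper, ← soper_eq_toper] at hz
    rw [soper_congr hFeq hmem, soper_congr hGeq hmem]
    linarith
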